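/- Let R be an NI ring and n a positive integer. Then whenever f, g in the multivariate polynomial ring R[x₁,…,xₙ] satisfy fg = 0, the product a·b of any coefficient a of f with any coefficient b of g is a nilpotent element of R. (This is the instance of Theorem 4.4 of the paper for the skew PBW extension R[x₁,…,xₙ] with all endomorphisms the identity, all derivations zero, and all commutation constants c_{i,j} = 1; the identity endomorphisms make R trivially weak Σ-rigid.) -/

import Mathlib

section Reduced
variable {S : Type*} [Ring S]

lemma red_swap (hred : ∀ x : S, x * x = 0 → x = 0) {a b : S} (h : a * b = 0) : b * a = 0 :=
  hred _ (by rw [mul_assoc, ← mul_assoc a, h, zero_mul, mul_zero])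

lemma red_mid (hred : ∀ x : S, x * x = 0 → x = 0) {a b : S} (h : a * b = 0) (r : S) : a * r * b = 0 := by
  apply hred
  have h' : b * a = 0 := red_swap hred h
  calc a * r * b * (a * r * b) = a * r * (b * a) * r * b := by noncomm_ring
  _ = 0 := by rw [h']; noncomm_ring

lemma red_sq_cancel (hred : ∀ x : S, x * x = 0 → x = 0) {z b : S} (h : z * b * b = 0) : z * b = 0 := by
  have hb : b * (z * b) = 0 := red_swap hred h
  apply hred
  calc z * b * (z * b) = z * (b * (z * b)) := by noncomm_ring
  _ = 0 := by rw [hb, mul_zero]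
end Reduced

/-- Armendariz-type lemma over a reduced target. -/
lemma armendariz_key {R S M : Type*} [Ring R] [Ring S]
    [AddCommMonoid M] [LinearOrder M] [IsOrderedCancelAddMonoid M] [WellFoundedLT M]
    (hred : ∀ x : S, x * x = 0 → x = 0) (π : R →+* S)
    (f g : AddMonoidAlgebra R M) (hfg : f * g = 0) :
    ∀ m m' : M, π (f.coeff m) * π (g.coeff m') = 0 := by
  classical
  -- coefficient sum formula
  have coeff : ∀ k : M,
      ∑ p ∈ (f.coeff.support ×ˢ g.coeff.support).filter (fun p => p.1 + p.2 = k),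
        π (f.coeff p.1) * π (g.coeff p.2) = 0 := by
    intro k
    have h0 : (f * g).coeff k = 0 := by rw [hfg]; rfl
    rw [AddMonoidAlgebra.coeff_mul] at h0
    have : (f.coeff.sum fun a₁ b₁ => g.coeff.sum fun a₂ b₂ => if a₁ + a₂ = k then b₁ * b₂ else 0)
        = ∑ p ∈ (f.coeff.support ×ˢ g.coeff.support).filter (fun p => p.1 + p.2 = k), f.coeff p.1 * g.coeff p.2 := by
      rw [Finset.sum_filter, Finset.sum_product]
      rfl
    rw [this] at h0
    have := congrArg π h0
    rw [map_sum] at this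
    simpa [map_mul] using this
  -- main double induction
  intro m m'
  by_cases hm : m ∈ f.coeff.support
  · by_cases hm' : m' ∈ g.coeff.support
    · -- strong induction on k = m + m'
      have main : ∀ k : M, ∀ m m' : M, m + m' = k →
          m ∈ f.coeff.support → m' ∈ g.coeff.support → π (f.coeff m) * π (g.coeff m') = 0 := by
        intro k
        induction k using WellFoundedLT.induction with
        | ind k IH1 =>
          -- secondary induction on m'
          have sec : ∀ q : M, ∀ p : M, p + q = k →
              p ∈ f.coeff.support → q ∈ g.coeff.support → π (f.coeff p) * π (g.coeff q) = 0 := by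
            intro q
            induction q using WellFoundedLT.induction with
            | ind q IH2 =>
              intro p hpq hp hq
              have hsum := coeff k
              have hsum' : ∑ x ∈ (f.coeff.support ×ˢ g.coeff.support).filter (fun x => x.1 + x.2 = k),
                  π (f.coeff x.1) * π (g.coeff x.2) * π (g.coeff q) = 0 := by
                rw [← Finset.sum_mul, hsum, zero_mul]
              have hsingle : ∑ x ∈ (f.coeff.support ×ˢ g.coeff.support).filter (fun x => x.1 + x.2 = k),
                  π (f.coeff x.1) * π (g.coeff x.2) * π (g.coeff q) = π (f.coeff p) * π (g.coeff q) * π (g.coeff q) := by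
                apply Finset.sum_eq_single (p, q)
                · rintro ⟨a, b⟩ hab hne
                  simp only [Finset.mem_filter, Finset.mem_product] at hab
                  obtain ⟨⟨ha, hb⟩, habk⟩ := hab
                  rcases lt_trichotomy b q with hlt | heq | hgt
                  · have : π (f.coeff a) * π (g.coeff b) = 0 := IH2 b hlt a habk ha hb
                    rw [this, zero_mul]
                  · exfalso; apply hne
                    subst heq
                    have : a = p := by
                      have := habk.trans hpq.symm
                      exact add_right_cancel this
                    rw [this]
                  · have hab' : a < p := by
                      have : a + q < a + b := add_lt_add_right hgt a
                      rw [habk, ← hpq] at this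
                      exact lt_of_add_lt_add_right this
                    have hk' : a + q < k := by
                      rw [← hpq]
                      exact add_lt_add_left hab' q
                    have : π (f.coeff a) * π (g.coeff q) = 0 := by
                      by_cases haq : q ∈ g.coeff.support
                      · exact IH1 (a + q) hk' a q rfl ha haq
                      · rw [Finsupp.notMem_support_iff.mp haq, map_zero, mul_zero]
                    exact red_mid hred this (π (g.coeff b))
                · intro habs
                  exfalso; apply habs
                  simp only [Finset.mem_filter, Finset.mem_product]
                  exact ⟨⟨hp, hq⟩, hpq⟩
              rw [hsingle] at hsum'
              exact red_sq_cancel hred hsum'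
          intro m m' h hm hm'
          exact sec m' m h hm hm'
      exact main (m + m') m m' rfl hm hm'
    · rw [Finsupp.notMem_support_iff.mp hm', map_zero, mul_zero]
  · rw [Finsupp.notMem_support_iff.mp hm, map_zero, zero_mul]

/-- If `R` is an NI ring (its nilpotent elements form a two-sided ideal) and `n` is a positive
integer, then whenever `f·g = 0` in the polynomial ring `R[x₁,…,xₙ]` in `n` central commuting
variables (realized as the monoid algebra of `R` over the additive monoid `Fin n →₀ ℕ` of
exponent multi-indices), the product of any coefficient of `f` with any coefficient of `g`
is nilpotent. -/
theorem stmt_9 {R : Type*} [Ring R] (n : ℕ) (hn : 0 < n)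
    (I : TwoSidedIdeal R) (hNI : ∀ x : R, x ∈ I ↔ IsNilpotent x)
    (f g : AddMonoidAlgebra R (Fin n →₀ ℕ)) (hfg : f * g = 0) :
    ∀ m m' : Fin n →₀ ℕ, IsNilpotent (f.coeff m * g.coeff m') := by
  intro m m'
  set S := I.ringCon.Quotient
  let π : R →+* S := I.ringCon.mk'
  have hker : ∀ x : R, π x = 0 ↔ x ∈ I := by
    intro x
    constructor
    · intro h
      rw [TwoSidedIdeal.mem_iff]
      exact I.ringCon.eq.mp h
    · intro h
      exact I.ringCon.eq.mpr h
  have hred : ∀ x : S, x * x = 0 → x = 0 := by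
    rintro ⟨x⟩ hx
    have : π x * π x = 0 := hx
    rw [← map_mul, hker] at this
    have hnil : IsNilpotent (x * x) := (hNI _).mp this
    have : IsNilpotent x := by
      obtain ⟨k, hk⟩ := hnil
      exact ⟨2 * k, by rw [pow_mul, pow_two, ← hk]⟩
    show π x = 0
    rw [hker]
    exact (hNI x).mpr this
  have key := armendariz_key (M := Lex (Fin n →₀ ℕ)) hred π f g hfg (toLex m) (toLex m')
  have : π (f.coeff m * g.coeff m') = 0 := by rw [map_mul]; exact key
  rw [hker] at this
  exact (hNI _).mp this
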